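/- The polynomial g(x,y,z) = (1/22)(4 + 3(x+y+z) + 3(xy+xz+yz)) is strongly log-concave: g and all its iterated partial derivatives ∂_{x_{i₁}}⋯∂_{x_{i_k}} g (for any k ≥ 0 and indices i₁,…,i_k ∈ {1,2,3}) are log-concave on ℝ³_{>0} (where a function that is identically zero or nonpositive is considered trivially log-concave). -/

import Mathlib

noncomputable def pderiv7 (i : Fin 3) (f : (Fin 3 → ℝ) → ℝ) : (Fin 3 → ℝ) → ℝ :=
  fun v => fderiv ℝ f v (Pi.single i 1)

noncomputable def g7 (v : Fin 3 → ℝ) : ℝ :=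
  (1/22) * (4 + 3*(v 0 + v 1 + v 2) + 3*(v 0 * v 1 + v 0 * v 2 + v 1 * v 2))

lemma convexS : Convex ℝ {v : Fin 3 → ℝ | ∀ i, 0 < v i} := by
  have h : {v : Fin 3 → ℝ | ∀ i, 0 < v i} = Set.pi Set.univ (fun _ => Set.Ioi (0:ℝ)) := by
    ext v; simp [Set.mem_pi]
  rw [h]
  exact convex_pi (fun i _ => convex_Ioi 0)

lemma g7_pos {v : Fin 3 → ℝ} (hv : ∀ i, 0 ≤ v i) : 0 < g7 v := by
  have h0 := hv 0; have h1 := hv 1; have h2 := hv 2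
  unfold g7
  nlinarith [mul_nonneg h0 h1, mul_nonneg h0 h2, mul_nonneg h1 h2]

lemma key (v0 v1 v2 d0 d1 d2 : ℝ) (h0 : 0 ≤ v0) (h1 : 0 ≤ v1) (h2 : 0 ≤ v2) :
    2*(3*(d0*d1+d0*d2+d1*d2)) * (4+3*(v0+v1+v2)+3*(v0*v1+v0*v2+v1*v2))
      ≤ (3*(d0+d1+d2) + 3*(d0*v1+d1*v0+d0*v2+d2*v0+d1*v2+d2*v1))^2 := by
  nlinarith [sq_nonneg d0, sq_nonneg d1, sq_nonneg d2, sq_nonneg (d0-d1), sq_nonneg (d0-d2),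
    sq_nonneg (d1-d2),
    mul_nonneg h0 (by positivity : (0:ℝ) ≤ (d1+d2)^2 + d1^2 + d2^2),
    mul_nonneg h1 (by positivity : (0:ℝ) ≤ (d0+d2)^2 + d0^2 + d2^2),
    mul_nonneg h2 (by positivity : (0:ℝ) ≤ (d0+d1)^2 + d0^2 + d1^2),
    mul_nonneg (mul_nonneg h0 h0) (sq_nonneg (d1+d2)),
    mul_nonneg (mul_nonneg h1 h1) (sq_nonneg (d0+d2)),
    mul_nonneg (mul_nonneg h2 h2) (sq_nonneg (d0+d1)),
    mul_nonneg (mul_nonneg h1 h2) (sq_nonneg d0),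
    mul_nonneg (mul_nonneg h0 h2) (sq_nonneg d1),
    mul_nonneg (mul_nonneg h0 h1) (sq_nonneg d2)]

lemma convpos {t u w : ℝ} (h0 : 0 ≤ t) (h1 : t ≤ 1) (hu : 0 < u) (hw : 0 < w) :
    0 < u + t * (w - u) := by
  rcases lt_or_ge t 1 with h | h
  · nlinarith [mul_pos (sub_pos.2 h) hu, mul_nonneg h0 hw.le]
  · nlinarith [mul_pos (lt_of_lt_of_le one_pos h) hw, mul_nonneg (sub_nonneg.2 h1) hu.le]

lemma main0 : ConcaveOn ℝ {v : Fin 3 → ℝ | ∀ i, 0 < v i} (fun v => Real.log (g7 v)) := by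
  refine ⟨convexS, ?_⟩
  intro x hx y hy a b ha hb hab
  obtain ⟨A, hA⟩ : ∃ A : ℝ, A = 3/22*((y 0-x 0)*(y 1-x 1)+(y 0-x 0)*(y 2-x 2)+(y 1-x 1)*(y 2-x 2)) :=
    ⟨_, rfl⟩
  obtain ⟨B, hB⟩ : ∃ B : ℝ, B = 1/22*(3*((y 0-x 0)+(y 1-x 1)+(y 2-x 2))
      + 3*((y 0-x 0)*(x 1)+(y 1-x 1)*(x 0)+(y 0-x 0)*(x 2)+(y 2-x 2)*(x 0)
        +(y 1-x 1)*(x 2)+(y 2-x 2)*(x 1))) := ⟨_, rfl⟩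
  obtain ⟨C, hC⟩ : ∃ C : ℝ, C = g7 x := ⟨_, rfl⟩
  have hq : ∀ t : ℝ, g7 (fun i => x i + t*(y i - x i)) = A*t^2+B*t+C := by
    intro t
    rw [hA, hB, hC]
    simp only [g7]
    ring
  have hpos : ∀ t ∈ Set.Icc (0:ℝ) 1, 0 < A*t^2+B*t+C := by
    intro t ht
    rw [← hq t]
    exact g7_pos (fun i => (convpos ht.1 ht.2 (hx i) (hy i)).le)
  have hq' : ∀ t : ℝ, HasDerivAt (fun s : ℝ => A*s^2+B*s+C) (2*A*t+B) t := by
    intro t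
    have h := (((hasDerivAt_pow 2 t).const_mul A).add ((hasDerivAt_id t).const_mul B)).add_const C
    refine h.congr_deriv ?_
    ring
  have hconc : ConcaveOn ℝ (Set.Icc (0:ℝ) 1) (fun t => Real.log (A*t^2+B*t+C)) := by
    apply concaveOn_of_hasDerivWithinAt2_nonpos (f' := fun t => (2*A*t+B)/(A*t^2+B*t+C))
      (f'' := fun t => (2*A*(A*t^2+B*t+C) - (2*A*t+B)^2)/(A*t^2+B*t+C)^2) (convex_Icc 0 1)
    · apply ContinuousOn.log
      · fun_prop
      · intro t ht
        exact (hpos t ht).ne'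
    · intro t ht
      rw [interior_Icc] at ht
      have hne := (hpos t (Set.Ioo_subset_Icc_self ht)).ne'
      have hlog := (Real.hasDerivAt_log hne).comp t (hq' t)
      have : (A*t^2+B*t+C)⁻¹ * (2*A*t+B) = (2*A*t+B)/(A*t^2+B*t+C) := by
        rw [inv_mul_eq_div]
      rw [this] at hlog
      exact hlog.hasDerivWithinAt
    · intro t ht
      rw [interior_Icc] at ht
      have hne := (hpos t (Set.Ioo_subset_Icc_self ht)).ne'
      have hu : HasDerivAt (fun s : ℝ => 2*A*s+B) (2*A) t := by
        have h := ((hasDerivAt_id t).const_mul (2*A)).add_const B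
        refine h.congr_deriv ?_
        ring
      have hdiv := hu.div (hq' t) hne
      have : 2*A*(A*t^2+B*t+C) - (2*A*t+B)*(2*A*t+B) = 2*A*(A*t^2+B*t+C) - (2*A*t+B)^2 := by ring
      rw [this] at hdiv
      exact hdiv.hasDerivWithinAt
    · intro t ht
      rw [interior_Icc] at ht
      apply div_nonpos_of_nonpos_of_nonneg _ (sq_nonneg _)
      have hK := key (x 0 + t*(y 0 - x 0)) (x 1 + t*(y 1 - x 1)) (x 2 + t*(y 2 - x 2))
        (y 0 - x 0) (y 1 - x 1) (y 2 - x 2)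
        (convpos ht.1.le ht.2.le (hx 0) (hy 0)).le
        (convpos ht.1.le ht.2.le (hx 1) (hy 1)).le
        (convpos ht.1.le ht.2.le (hx 2) (hy 2)).le
      rw [hA, hB, hC]
      simp only [g7]
      linarith [hK]
  have h0m : (0:ℝ) ∈ Set.Icc (0:ℝ) 1 := by constructor <;> norm_num
  have h1m : (1:ℝ) ∈ Set.Icc (0:ℝ) 1 := by constructor <;> norm_num
  have hfin := hconc.2 h0m h1m ha hb hab
  simp only [smul_eq_mul] at hfin
  rw [show a*(0:ℝ)+b*(1:ℝ) = b from by ring] at hfin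
  have e0 : A*0^2+B*0+C = g7 x := by rw [← hq 0]; congr 1; funext i; ring
  have e1 : A*1^2+B*1+C = g7 y := by rw [← hq 1]; congr 1; funext i; ring
  have eb : A*b^2+B*b+C = g7 (a • x + b • y) := by
    rw [← hq b]
    congr 1
    funext i
    simp only [Pi.add_apply, Pi.smul_apply, smul_eq_mul]
    have h' : a = 1 - b := by linarith
    rw [h']; ring
  rw [e0, e1, eb] at hfin
  simpa [smul_eq_mul] using hfin

lemma pderiv7_g7 (i : Fin 3) :
    pderiv7 i g7 = fun v => 3/22 * (1 + (v 0 + v 1 + v 2) - v i) := by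
  funext v
  have h0 : HasFDerivAt (fun v : Fin 3 → ℝ => v 0)
      (ContinuousLinearMap.proj (R := ℝ) (φ := fun _ : Fin 3 => ℝ) 0) v :=
    (ContinuousLinearMap.proj (R := ℝ) (φ := fun _ : Fin 3 => ℝ) 0).hasFDerivAt
  have h1 : HasFDerivAt (fun v : Fin 3 → ℝ => v 1)
      (ContinuousLinearMap.proj (R := ℝ) (φ := fun _ : Fin 3 => ℝ) 1) v :=
    (ContinuousLinearMap.proj (R := ℝ) (φ := fun _ : Fin 3 => ℝ) 1).hasFDerivAt
  have h2 : HasFDerivAt (fun v : Fin 3 → ℝ => v 2)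
      (ContinuousLinearMap.proj (R := ℝ) (φ := fun _ : Fin 3 => ℝ) 2) v :=
    (ContinuousLinearMap.proj (R := ℝ) (φ := fun _ : Fin 3 => ℝ) 2).hasFDerivAt
  have hg := ((((h0.add h1).add h2).const_mul (3:ℝ)).const_add (4:ℝ)).add
      ((((h0.mul h1).add (h0.mul h2)).add (h1.mul h2)).const_mul (3:ℝ))
  have hg2 : HasFDerivAt g7 _ v := hg.const_mul (1/22 : ℝ)
  show fderiv ℝ g7 v (Pi.single i 1) = _
  rw [hg2.fderiv]
  simp [Pi.single_apply]
  fin_cases i <;> simp <;> ring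

lemma pderiv7_affine (i j : Fin 3) :
    pderiv7 j (fun v => 3/22 * (1 + (v 0 + v 1 + v 2) - v i))
      = fun _ => if i = j then 0 else 3/22 := by
  funext v
  have h0 : HasFDerivAt (fun v : Fin 3 → ℝ => v 0)
      (ContinuousLinearMap.proj (R := ℝ) (φ := fun _ : Fin 3 => ℝ) 0) v :=
    (ContinuousLinearMap.proj (R := ℝ) (φ := fun _ : Fin 3 => ℝ) 0).hasFDerivAt
  have h1 : HasFDerivAt (fun v : Fin 3 → ℝ => v 1)
      (ContinuousLinearMap.proj (R := ℝ) (φ := fun _ : Fin 3 => ℝ) 1) v :=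
    (ContinuousLinearMap.proj (R := ℝ) (φ := fun _ : Fin 3 => ℝ) 1).hasFDerivAt
  have h2 : HasFDerivAt (fun v : Fin 3 → ℝ => v 2)
      (ContinuousLinearMap.proj (R := ℝ) (φ := fun _ : Fin 3 => ℝ) 2) v :=
    (ContinuousLinearMap.proj (R := ℝ) (φ := fun _ : Fin 3 => ℝ) 2).hasFDerivAt
  have hi : HasFDerivAt (fun v : Fin 3 → ℝ => v i)
      (ContinuousLinearMap.proj (R := ℝ) (φ := fun _ : Fin 3 => ℝ) i) v :=
    (ContinuousLinearMap.proj (R := ℝ) (φ := fun _ : Fin 3 => ℝ) i).hasFDerivAt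
  have hg : HasFDerivAt (fun v : Fin 3 → ℝ => 3/22 * (1 + (v 0 + v 1 + v 2) - v i)) _ v :=
    ((((h0.add h1).add h2).const_add (1:ℝ)).sub hi).const_mul (3/22 : ℝ)
  show fderiv ℝ _ v (Pi.single j 1) = _
  rw [hg.fderiv]
  simp [Pi.single_apply]
  fin_cases i <;> fin_cases j <;> simp

lemma pderiv7_const (j : Fin 3) (c : ℝ) : pderiv7 j (fun _ => c) = fun _ => 0 := by
  funext v
  simp [pderiv7]

lemma foldr_const : ∀ (t : List (Fin 3)) (j k : Fin 3),
    ∃ c : ℝ, List.foldr pderiv7 g7 (j::k::t) = fun _ => c := by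
  intro t
  induction t with
  | nil =>
    intro j k
    refine ⟨if k = j then 0 else 3/22, ?_⟩
    show pderiv7 j (pderiv7 k g7) = _
    rw [pderiv7_g7 k, pderiv7_affine k j]
  | cons m t ih =>
    intro j k
    obtain ⟨c, hc⟩ := ih k m
    refine ⟨0, ?_⟩
    show pderiv7 j (List.foldr pderiv7 g7 (k::m::t)) = _
    rw [hc, pderiv7_const]

lemma affine_concave (i : Fin 3) :
    ConcaveOn ℝ {v : Fin 3 → ℝ | ∀ i, 0 < v i}
      (fun v => Real.log (3/22 * (1 + (v 0 + v 1 + v 2) - v i))) := by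
  refine ⟨convexS, ?_⟩
  intro x hx y hy a b ha hb hab
  have hx0 := hx 0; have hx1 := hx 1; have hx2 := hx 2
  have hy0 := hy 0; have hy1 := hy 1; have hy2 := hy 2
  have hxi : x i ≤ x 0 + x 1 + x 2 := by
    fin_cases i <;> simp <;> linarith
  have hyi : y i ≤ y 0 + y 1 + y 2 := by
    fin_cases i <;> simp <;> linarith
  have hu : (0:ℝ) < 3/22 * (1 + (x 0 + x 1 + x 2) - x i) := by nlinarith
  have hw : (0:ℝ) < 3/22 * (1 + (y 0 + y 1 + y 2) - y i) := by nlinarith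
  have hlog := strictConcaveOn_log_Ioi.concaveOn.2 (Set.mem_Ioi.2 hu) (Set.mem_Ioi.2 hw)
    ha hb hab
  simp only [smul_eq_mul, Pi.add_apply, Pi.smul_apply] at *
  have he : 3/22 * (1 + (a * x 0 + b * y 0 + (a * x 1 + b * y 1) + (a * x 2 + b * y 2))
        - (a * x i + b * y i))
      = a * (3/22 * (1 + (x 0 + x 1 + x 2) - x i)) + b * (3/22 * (1 + (y 0 + y 1 + y 2) - y i)) := by
    have h' : a = 1 - b := by linarith
    rw [h']; ring
  rw [he]
  exact hlog

theorem stmt_7 :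
    ∀ l : List (Fin 3),
      ConcaveOn ℝ {v : Fin 3 → ℝ | ∀ i, 0 < v i}
        (fun v => Real.log ((l.foldr pderiv7 g7) v)) := by
  intro l
  match l with
  | [] => exact main0
  | [i] =>
    have h : List.foldr pderiv7 g7 [i] = pderiv7 i g7 := rfl
    rw [h, pderiv7_g7 i]
    exact affine_concave i
  | j::k::t =>
    obtain ⟨c, hc⟩ := foldr_const t j k
    rw [hc]
    exact concaveOn_const _ convexS
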